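/- For the balloon graph G_k (k ≥ 2), consisting of k disjoint 5-cycles and one extra vertex adjacent to exactly one vertex of each 5-cycle, one has μ(D(G_k)) − (n(G_k) + μ_t(G_k)) ≥ k − 1; equivalently μ(D(G_k)) ≥ 6k, since n(G_k) = 5k+1 and μ_t(G_k) = 0. -/

import Mathlib

open SimpleGraph

variable {V : Type*}

/-- A walk is a shortest path if it is a path and its length equals the distance
between its endpoints. -/
def SimpleGraph.IsShortestPath (G : SimpleGraph V) {u v : V} (p : G.Walk u v) : Prop :=
  p.IsPath ∧ p.length = G.dist u v

/-- `S` is a general position set: no three vertices of `S` lie on a common shortest path. -/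
def SimpleGraph.IsGPSet (G : SimpleGraph V) (S : Set V) : Prop :=
  ∀ ⦃u v : V⦄ (p : G.Walk u v), G.IsShortestPath p →
    ∀ x ∈ S, ∀ y ∈ S, ∀ z ∈ S, x ≠ y → x ≠ z → y ≠ z →
      ¬ (x ∈ p.support ∧ y ∈ p.support ∧ z ∈ p.support)

/-- `u` and `v` are `S`-visible: some shortest `u,v`-path has no internal vertex in `S`. -/
def SimpleGraph.SVisible (G : SimpleGraph V) (S : Set V) (u v : V) : Prop :=
  ∃ p : G.Walk u v, G.IsShortestPath p ∧ ∀ w ∈ p.support, w ≠ u → w ≠ v → w ∉ S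

/-- `S` is a mutual-visibility set. -/
def SimpleGraph.IsMVSet (G : SimpleGraph V) (S : Set V) : Prop :=
  ∀ u ∈ S, ∀ v ∈ S, u ≠ v → G.SVisible S u v

/-- `S` is a total mutual-visibility set. -/
def SimpleGraph.IsTotalMVSet (G : SimpleGraph V) (S : Set V) : Prop :=
  ∀ u v : V, u ≠ v → G.SVisible S u v

/-- `S` is an outer mutual-visibility set. -/
def SimpleGraph.IsOuterMVSet (G : SimpleGraph V) (S : Set V) : Prop :=
  G.IsMVSet S ∧ ∀ u ∈ S, ∀ v ∉ S, u ≠ v → G.SVisible S u v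

/-- The mutual-visibility number `μ(G)`. -/
noncomputable def SimpleGraph.mutualVisibilityNumber (G : SimpleGraph V) [Fintype V] : ℕ :=
  sSup {k | ∃ S : Finset V, G.IsMVSet ↑S ∧ S.card = k}

/-- The total mutual-visibility number `μ_t(G)`. -/
noncomputable def SimpleGraph.totalMutualVisibilityNumber (G : SimpleGraph V) [Fintype V] : ℕ :=
  sSup {k | ∃ S : Finset V, G.IsTotalMVSet ↑S ∧ S.card = k}

/-- The outer mutual-visibility number `μ_o(G)`. -/
noncomputable def SimpleGraph.outerMutualVisibilityNumber (G : SimpleGraph V) [Fintype V] : ℕ :=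
  sSup {k | ∃ S : Finset V, G.IsOuterMVSet ↑S ∧ S.card = k}

/-- The general position number `gp(G)`. -/
noncomputable def SimpleGraph.gpNumber (G : SimpleGraph V) [Fintype V] : ℕ :=
  sSup {k | ∃ S : Finset V, G.IsGPSet ↑S ∧ S.card = k}

/-- The double graph `D(G)`: two copies of each vertex, `(u, b)` adjacent to `(v, c)`
iff `u` adjacent to `v` in `G`. -/
def SimpleGraph.doubleGraph (G : SimpleGraph V) : SimpleGraph (V × Bool) where
  Adj x y := G.Adj x.1 y.1
  symm := ⟨fun _ _ h => G.adj_symm h⟩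
  loopless := ⟨fun _ h => G.irrefl h⟩

/-- The Mycielskian `M(G)`: `some (u, false)` are the original vertices, `some (u, true)`
their copies, and `none` is the apex vertex `v*`. -/
def SimpleGraph.mycielskian (G : SimpleGraph V) : SimpleGraph (Option (V × Bool)) where
  Adj x y := match x, y with
    | some (u, false), some (v, false) => G.Adj u v
    | some (u, false), some (v, true) => G.Adj u v
    | some (u, true), some (v, false) => G.Adj u v
    | some (_, true), none => True
    | none, some (_, true) => True
    | _, _ => False
  symm := by
    constructor
    rintro (_ | ⟨u, (_|_)⟩) (_ | ⟨v, (_|_)⟩) h <;>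
      first
        | exact h
        | exact G.adj_symm h
  loopless := by
    constructor
    rintro (_ | ⟨u, (_|_)⟩) h
    · exact h
    · exact G.irrefl h
    · exact h


/-- The balloon graph `G_k`: `k` disjoint 5-cycles plus a hub vertex (`none`) adjacent to
exactly one vertex (the one with second coordinate `0`) of each 5-cycle. -/
def balloonGraph (k : ℕ) : SimpleGraph (Option (Fin k × ZMod 5)) where
  Adj x y := match x, y with
    | some (i, a), some (j, b) => i = j ∧ (a - b = 1 ∨ b - a = 1)
    | some (_, a), none => a = 0
    | none, some (_, a) => a = 0
    | none, none => False
  symm := by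
    constructor
    rintro (_ | ⟨i, a⟩) (_ | ⟨j, b⟩) h
    · exact h
    · exact h
    · exact h
    · exact ⟨h.1.symm, h.2.symm⟩
  loopless := by
    constructor
    rintro (_ | ⟨i, a⟩) h
    · exact h
    · rcases h.2 with h' | h' <;> rw [sub_self] at h' <;> exact (by decide : (0 : ZMod 5) ≠ 1) h'

section MyHelpers

variable {W : Type*}

lemma pot_walk {G : SimpleGraph W} (f : W → ℕ)
    (hf : ∀ x y, G.Adj x y → f y ≤ f x + 1) :
    ∀ {u v : W} (q : G.Walk u v), f v ≤ f u + q.length := by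
  intro u v q
  induction q with
  | nil => simp
  | @cons a b c h q ih =>
    have := hf _ _ h
    simp only [SimpleGraph.Walk.length_cons]
    omega

lemma pot_dist {G : SimpleGraph W} (f : W → ℕ)
    (hf : ∀ x y, G.Adj x y → f y ≤ f x + 1) {u v : W} (h : G.Reachable u v) :
    f v ≤ f u + G.dist u v := by
  obtain ⟨q, hq⟩ := h.exists_walk_length_eq_dist
  simpa [hq] using pot_walk f hf q

lemma svis_of_walk {G : SimpleGraph W} {S : Set W} {u v : W} (p : G.Walk u v)
    (hp : p.support.Nodup) (hd : G.Reachable u v → p.length ≤ G.dist u v)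
    (hS : ∀ w ∈ p.support, w ≠ u → w ≠ v → w ∉ S) : G.SVisible S u v :=
  ⟨p, ⟨SimpleGraph.Walk.IsPath.mk' hp, le_antisymm (hd p.reachable) (G.dist_le p)⟩, hS⟩

lemma two_le_dist {G : SimpleGraph W} {u v : W} (h : G.Reachable u v) (hne : u ≠ v)
    (hadj : ¬ G.Adj u v) : 2 ≤ G.dist u v := by
  have h0 := h.pos_dist_of_ne hne
  have h1 : G.dist u v ≠ 1 := fun e => hadj (SimpleGraph.dist_eq_one_iff_adj.mp e)
  omega

lemma walk2_mid {G : SimpleGraph W} {u v : W} (p : G.Walk u v) (h2 : p.length ≤ 2)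
    (hne : u ≠ v) (hnadj : ¬ G.Adj u v) :
    ∃ x, G.Adj u x ∧ G.Adj x v ∧ p.support = [u, x, v] := by
  cases p with
  | nil => exact absurd rfl hne
  | cons h q =>
    cases q with
    | nil => exact absurd h hnadj
    | cons h' q' =>
      cases q' with
      | nil => exact ⟨_, h, h', by simp⟩
      | cons h'' q'' => simp [SimpleGraph.Walk.length_cons] at h2

lemma exists_shortest [DecidableEq W] {G : SimpleGraph W} {u v : W} (h : G.Reachable u v) :
    ∃ p : G.Walk u v, G.IsShortestPath p := by
  obtain ⟨p, hp⟩ := h.exists_walk_length_eq_dist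
  refine ⟨p.bypass, p.bypass_isPath, le_antisymm ?_ (G.dist_le _)⟩
  exact hp ▸ p.length_bypass_le

lemma svis_adj {G : SimpleGraph W} {S : Set W} {u v : W} (h : G.Adj u v) :
    G.SVisible S u v := by
  refine svis_of_walk (SimpleGraph.Walk.cons h SimpleGraph.Walk.nil) ?_ ?_ ?_
  · simp [h.ne]
  · intro hr
    have h1 := hr.pos_dist_of_ne h.ne
    simp only [SimpleGraph.Walk.length_cons, SimpleGraph.Walk.length_nil]
    omega
  · intro w hw hwu hwv
    simp only [SimpleGraph.Walk.support_cons, SimpleGraph.Walk.support_nil,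
      List.mem_cons, List.mem_singleton, List.not_mem_nil, or_false] at hw
    rcases hw with rfl | rfl
    · exact absurd rfl hwu
    · exact absurd rfl hwv

lemma svis_two {G : SimpleGraph W} {S : Set W} {u v m : W} (h1 : G.Adj u m) (h2 : G.Adj m v)
    (hne : u ≠ v) (hnadj : ¬ G.Adj u v) (hm : m ∉ S) : G.SVisible S u v := by
  refine svis_of_walk
    (SimpleGraph.Walk.cons h1 (SimpleGraph.Walk.cons h2 SimpleGraph.Walk.nil)) ?_ ?_ ?_
  · simp [h1.ne, h2.ne, hne]
  · intro hr
    have := two_le_dist hr hne hnadj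
    simp only [SimpleGraph.Walk.length_cons, SimpleGraph.Walk.length_nil]
    omega
  · intro w hw hwu hwv
    simp only [SimpleGraph.Walk.support_cons, SimpleGraph.Walk.support_nil,
      List.mem_cons, List.mem_singleton, List.not_mem_nil, or_false] at hw
    rcases hw with rfl | rfl | rfl
    exacts [absurd rfl hwu, hm, absurd rfl hwv]

end MyHelpers
section BalloonHelpers

/-- distance from `x` to `0` in the 5-cycle -/
def cyc (x : ZMod 5) : ℕ := min x.val (5 - x.val)

abbrev BV (k : ℕ) := (Option (Fin k × ZMod 5)) × Bool

/-- potential function: distance from `(i,a)` in the balloon graph -/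
def pot (k : ℕ) (i : Fin k) (a : ZMod 5) : Option (Fin k × ZMod 5) → ℕ
  | none => cyc a + 1
  | some (j, c) => if j = i then cyc (c - a) else cyc c + 2 + cyc a

lemma pot_lip (k : ℕ) (i : Fin k) (a : ZMod 5) :
    ∀ x y, (balloonGraph k).Adj x y → pot k i a y ≤ pot k i a x + 1 := by
  rintro (_ | ⟨l, c⟩) (_ | ⟨m, e⟩) h
  · exact h.elim
  · have he : e = 0 := h
    subst he
    by_cases hm : m = i
    · simp only [pot, if_pos hm]; revert a; decide
    · simp only [pot, if_neg hm]; revert a; decide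
  · have hc : c = 0 := h
    subst hc
    by_cases hl : l = i
    · simp only [pot, if_pos hl]; revert a; decide
    · simp only [pot, if_neg hl]; revert a; decide
  · obtain ⟨rfl, hce⟩ := h
    by_cases hl : l = i
    · simp only [pot, if_pos hl]
      revert hce; revert a c e; decide
    · simp only [pot, if_neg hl]
      revert hce; revert a c e; decide

lemma dist_lower_cross {k : ℕ} {i j : Fin k} {a c : ZMod 5} {β γ : Bool} (hij : i ≠ j)
    (hr : (balloonGraph k).doubleGraph.Reachable (some (i,a), β) (some (j,c), γ)) :
    cyc c + 2 + cyc a ≤ (balloonGraph k).doubleGraph.dist (some (i,a), β) (some (j,c), γ) := by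
  have h := pot_dist (fun y => pot k i a y.1)
    (fun x y h => pot_lip k i a x.1 y.1 (by exact h)) hr
  simp only [pot] at h
  rw [if_neg (Ne.symm hij)] at h
  simpa [sub_self, (by decide : cyc 0 = 0)] using h

lemma adjDc {k : ℕ} {i : Fin k} {a : ZMod 5} {β : Bool} (c : ZMod 5) (γ : Bool)
    (h : a - c = 1 ∨ c - a = 1) :
    (balloonGraph k).doubleGraph.Adj (some (i,a), β) (some (i,c), γ) := And.intro rfl h

lemma adjDh {k : ℕ} {i : Fin k} {β : Bool} (γ : Bool) :
    (balloonGraph k).doubleGraph.Adj (some (i,(0:ZMod 5)), β) ((none, γ) : BV k) := by exact (rfl : (0:ZMod 5) = 0)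

lemma adjDh' {k : ℕ} {β : Bool} (j : Fin k) (γ : Bool) :
    (balloonGraph k).doubleGraph.Adj ((none, β) : BV k) (some (j,(0:ZMod 5)), γ) := by exact (rfl : (0:ZMod 5) = 0)

lemma neBV {k : ℕ} {i j : Fin k} {x y : ZMod 5} {β γ : Bool} (h : x ≠ y) :
    ((some (i,x), β) : BV k) ≠ (some (j,y), γ) :=
  fun e => h (congrArg Prod.snd (Option.some.inj (congrArg Prod.fst e)))

def Qb (y : ZMod 5 × Bool) : Bool :=
  y.1 == 1 || y.1 == 3 || (y.1 == 0 && !y.2) || (y.1 == 4 && !y.2)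

def Pb {k : ℕ} : BV k → Bool
  | (some p, b) => Qb (p.2, b)
  | (none, _) => false

def SB (k : ℕ) : Finset (BV k) := Finset.univ.filter (fun x => Pb x = true)

lemma mem_SB {k : ℕ} {x : BV k} : x ∈ (↑(SB k) : Set (BV k)) ↔ Pb x = true := by
  simp [SB]

lemma not_mem_SB_some {k : ℕ} {i : Fin k} {a : ZMod 5} {b : Bool}
    (h : ¬ Qb (a, b) = true) : ((some (i,a), b) : BV k) ∉ (↑(SB k) : Set (BV k)) := by
  rw [mem_SB]; exact h

lemma not_mem_SB_none {k : ℕ} {b : Bool} :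
    ((none, b) : BV k) ∉ (↑(SB k) : Set (BV k)) := by
  rw [mem_SB]; simp [Pb]

def eSB (k : ℕ) : {x : BV k // Pb x = true} ≃ (Fin k × {y : ZMod 5 × Bool // Qb y = true}) where
  toFun := fun x => match x with
    | ⟨(some (i,a), b), h⟩ => (i, ⟨(a,b), h⟩)
    | ⟨(none, _), h⟩ => absurd h (by simp [Pb])
  invFun := fun y => ⟨(some (y.1, y.2.1.1), y.2.1.2), y.2.2⟩
  left_inv := by
    rintro ⟨⟨_ | ⟨i,a⟩, b⟩, h⟩
    · exact absurd h (by simp [Pb])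
    · rfl
  right_inv := by
    rintro ⟨i, ⟨⟨a, b⟩, h⟩⟩
    rfl

lemma card_SB {k : ℕ} : (SB k).card = 6 * k := by
  have h1 : (SB k).card = Fintype.card {x : BV k // Pb x = true} :=
    (Fintype.card_subtype _).symm
  rw [h1, Fintype.card_congr (eSB k), Fintype.card_prod, Fintype.card_fin,
    (by decide : Fintype.card {y : ZMod 5 × Bool // Qb y = true} = 6)]
  ring

lemma balloon_reach_none {k : ℕ} (i : Fin k) (a : ZMod 5) :
    (balloonGraph k).Reachable (some (i,a)) none := by
  have h0 : (balloonGraph k).Reachable (some (i,0)) none := SimpleGraph.Adj.reachable rfl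
  have step : ∀ x y : ZMod 5, (x - y = 1 ∨ y - x = 1) →
      (balloonGraph k).Reachable (some (i,x)) (some (i,y)) :=
    fun x y h => SimpleGraph.Adj.reachable ⟨rfl, h⟩
  have h5 : ∀ b : ZMod 5, b = 0 ∨ b = 1 ∨ b = 2 ∨ b = 3 ∨ b = 4 := by decide
  rcases h5 a with rfl | rfl | rfl | rfl | rfl
  · exact h0
  · exact (step 1 0 (by decide)).trans h0
  · exact ((step 2 1 (by decide)).trans (step 1 0 (by decide))).trans h0
  · exact ((step 3 4 (by decide)).trans (step 4 0 (by decide))).trans h0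
  · exact (step 4 0 (by decide)).trans h0

lemma balloon_preconnected {k : ℕ} :
    ∀ u v, (balloonGraph k).Reachable u v := by
  rintro (_ | ⟨i, a⟩) (_ | ⟨j, b⟩)
  · exact SimpleGraph.Reachable.refl _
  · exact (balloon_reach_none j b).symm
  · exact balloon_reach_none i a
  · exact (balloon_reach_none i a).trans (balloon_reach_none j b).symm

end BalloonHelpers
section TMV

lemma tmv_zero {k : ℕ} (hk : 2 ≤ k) :
    (balloonGraph k).totalMutualVisibilityNumber = 0 := by
  have hzero : ∀ n ∈ {n | ∃ S : Finset (Option (Fin k × ZMod 5)),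
      (balloonGraph k).IsTotalMVSet ↑S ∧ S.card = n}, n = 0 := by
    rintro n ⟨S, hS, rfl⟩
    by_contra hne
    obtain ⟨w, hw⟩ := Finset.card_pos.mp (Nat.pos_of_ne_zero hne)
    have hwS : w ∈ (↑S : Set (Option (Fin k × ZMod 5))) := hw
    rcases w with _ | ⟨i, a⟩
    · -- the hub is in S
      have hne01 : (⟨0, by omega⟩ : Fin k) ≠ ⟨1, by omega⟩ := by simp [Fin.ext_iff]
      set u : Option (Fin k × ZMod 5) := some (⟨0, by omega⟩, 0) with hu
      set v : Option (Fin k × ZMod 5) := some (⟨1, by omega⟩, 0) with hv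
      have huv : u ≠ v := fun e => hne01 (congrArg Prod.fst (Option.some.inj e))
      obtain ⟨p, ⟨hp, hlen⟩, havoid⟩ := hS u v huv
      have e1 : (balloonGraph k).Adj u none := rfl
      have e2 : (balloonGraph k).Adj none v := rfl
      have hd2 := SimpleGraph.dist_le (SimpleGraph.Walk.cons e1
        (SimpleGraph.Walk.cons e2 SimpleGraph.Walk.nil))
      simp only [SimpleGraph.Walk.length_cons, SimpleGraph.Walk.length_nil] at hd2
      have hnadj : ¬ (balloonGraph k).Adj u v := fun h => hne01 h.1
      obtain ⟨x, hx1, hx2, hsup⟩ := walk2_mid p (le_trans (le_of_eq hlen) hd2) huv hnadj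
      rcases x with _ | ⟨l, c⟩
      · exact havoid none (by rw [hsup]; simp) (fun e => by simp [hu] at e)
          (fun e => by simp [hv] at e) hwS
      · exact hne01 (hx1.1.trans hx2.1)
    · -- a cycle vertex (i, a) is in S
      have hkey : ∀ b x : ZMod 5, ((b-1) - x = 1 ∨ x - (b-1) = 1) →
          (x - (b+1) = 1 ∨ (b+1) - x = 1) → x = b := by decide
      have hne' : ∀ b : ZMod 5, b - 1 ≠ b + 1 := by decide
      have huv : (some (i, a-1) : Option (Fin k × ZMod 5)) ≠ some (i, a+1) :=
        fun e => hne' a (congrArg Prod.snd (Option.some.inj e))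
      obtain ⟨p, ⟨hp, hlen⟩, havoid⟩ := hS _ _ huv
      have d1 : ∀ b : ZMod 5, b - (b-1) = 1 := by decide
      have d2 : ∀ b : ZMod 5, (b+1) - b = 1 := by decide
      have e1 : (balloonGraph k).Adj (some (i, a-1)) (some (i, a)) := ⟨rfl, Or.inr (d1 a)⟩
      have e2 : (balloonGraph k).Adj (some (i, a)) (some (i, a+1)) := ⟨rfl, Or.inr (d2 a)⟩
      have hd2 := SimpleGraph.dist_le (SimpleGraph.Walk.cons e1
        (SimpleGraph.Walk.cons e2 SimpleGraph.Walk.nil))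
      simp only [SimpleGraph.Walk.length_cons, SimpleGraph.Walk.length_nil] at hd2
      have hno : ∀ b : ZMod 5, ¬(((b-1)-(b+1) = 1) ∨ ((b+1)-(b-1) = 1)) := by decide
      have hnadj : ¬ (balloonGraph k).Adj (some (i, a-1)) (some (i, a+1)) :=
        fun h => hno a h.2
      obtain ⟨x, hx1, hx2, hsup⟩ := walk2_mid p (le_trans (le_of_eq hlen) hd2) huv hnadj
      rcases x with _ | ⟨l, c⟩
      · have h1 : a - 1 = 0 := hx1
        have h2 : a + 1 = 0 := hx2
        exact (by decide : ∀ b : ZMod 5, b - 1 = 0 → b + 1 = 0 → False) a h1 h2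
      · obtain ⟨hil, hc1⟩ := hx1
        have hc : c = a := hkey a c hc1 hx2.2
        have hxu : (some (l, c) : Option (Fin k × ZMod 5)) ≠ some (i, a - 1) :=
          fun e => (by decide : ∀ b : ZMod 5, ¬(b = b - 1)) a
            (hc ▸ congrArg Prod.snd (Option.some.inj e))
        have hxv : (some (l, c) : Option (Fin k × ZMod 5)) ≠ some (i, a + 1) :=
          fun e => (by decide : ∀ b : ZMod 5, ¬(b = b + 1)) a
            (hc ▸ congrArg Prod.snd (Option.some.inj e))
        have hxw : (some (l, c) : Option (Fin k × ZMod 5)) = some (i, a) := by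
          rw [hc, ← hil]
        exact havoid _ (by rw [hsup]; simp) hxu hxv (hxw ▸ hwS)
  have h0 : 0 ∈ {n | ∃ S : Finset (Option (Fin k × ZMod 5)),
      (balloonGraph k).IsTotalMVSet ↑S ∧ S.card = n} := by
    refine ⟨∅, fun u v huv => ?_, Finset.card_empty⟩
    obtain ⟨p, hp⟩ := exists_shortest (balloon_preconnected u v)
    exact ⟨p, hp, by simp⟩
  have hset : {n | ∃ S : Finset (Option (Fin k × ZMod 5)),
      (balloonGraph k).IsTotalMVSet ↑S ∧ S.card = n} = {0} :=
    Set.eq_singleton_iff_unique_mem.mpr ⟨h0, hzero⟩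
  rw [SimpleGraph.totalMutualVisibilityNumber, hset, csSup_singleton]

end TMV
lemma mv_SB {k : ℕ} : (balloonGraph k).doubleGraph.IsMVSet ↑(SB k) := by
  intro u hu v hv huv
  obtain ⟨x, bu⟩ := u
  obtain ⟨y, bv⟩ := v
  rcases x with _ | ⟨i, a⟩
  · exact absurd (mem_SB.mp hu) (by simp [Pb])
  rcases y with _ | ⟨j, c⟩
  · exact absurd (mem_SB.mp hv) (by simp [Pb])
  have hu' : Qb (a, bu) = true := mem_SB.mp hu
  have hv' : Qb (c, bv) = true := mem_SB.mp hv
  have hQ : ∀ y : ZMod 5 × Bool, Qb y = true →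
      (y.1 = 1 ∨ y.1 = 3 ∨ (y.1 = 0 ∧ y.2 = false) ∨ (y.1 = 4 ∧ y.2 = false)) := by decide
  by_cases hij : i = j
  · obtain rfl := hij
    rcases hQ _ hu' with rfl | rfl | ⟨rfl, rfl⟩ | ⟨rfl, rfl⟩
    · rcases hQ _ hv' with rfl | rfl | ⟨rfl, rfl⟩ | ⟨rfl, rfl⟩
      · exact svis_two (adjDc 0 true (by decide)) (adjDc 1 bv (by decide)) huv
          (fun h => absurd (show _ ∧ _ from h).2 (by decide)) (not_mem_SB_some (by decide))
      · exact svis_two (adjDc 2 true (by decide)) (adjDc 3 bv (by decide)) huv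
          (fun h => absurd (show _ ∧ _ from h).2 (by decide)) (not_mem_SB_some (by decide))
      · exact svis_adj (adjDc 0 false (by decide))
      · exact svis_two (adjDc 0 true (by decide)) (adjDc 4 false (by decide)) huv
          (fun h => absurd (show _ ∧ _ from h).2 (by decide)) (not_mem_SB_some (by decide))
    · rcases hQ _ hv' with rfl | rfl | ⟨rfl, rfl⟩ | ⟨rfl, rfl⟩
      · exact svis_two (adjDc 2 true (by decide)) (adjDc 1 bv (by decide)) huv
          (fun h => absurd (show _ ∧ _ from h).2 (by decide)) (not_mem_SB_some (by decide))
      · exact svis_two (adjDc 4 true (by decide)) (adjDc 3 bv (by decide)) huv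
          (fun h => absurd (show _ ∧ _ from h).2 (by decide)) (not_mem_SB_some (by decide))
      · exact svis_two (adjDc 4 true (by decide)) (adjDc 0 false (by decide)) huv
          (fun h => absurd (show _ ∧ _ from h).2 (by decide)) (not_mem_SB_some (by decide))
      · exact svis_adj (adjDc 4 false (by decide))
    · rcases hQ _ hv' with rfl | rfl | ⟨rfl, rfl⟩ | ⟨rfl, rfl⟩
      · exact svis_adj (adjDc 1 bv (by decide))
      · exact svis_two (adjDc 4 true (by decide)) (adjDc 3 bv (by decide)) huv
          (fun h => absurd (show _ ∧ _ from h).2 (by decide)) (not_mem_SB_some (by decide))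
      · exact absurd rfl huv
      · exact svis_adj (adjDc 4 false (by decide))
    · rcases hQ _ hv' with rfl | rfl | ⟨rfl, rfl⟩ | ⟨rfl, rfl⟩
      · exact svis_two (adjDc 0 true (by decide)) (adjDc 1 bv (by decide)) huv
          (fun h => absurd (show _ ∧ _ from h).2 (by decide)) (not_mem_SB_some (by decide))
      · exact svis_adj (adjDc 3 bv (by decide))
      · exact svis_adj (adjDc 0 false (by decide))
      · exact absurd rfl huv
  · rcases hQ _ hu' with rfl | rfl | ⟨rfl, rfl⟩ | ⟨rfl, rfl⟩
    · rcases hQ _ hv' with rfl | rfl | ⟨rfl, rfl⟩ | ⟨rfl, rfl⟩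
      · refine svis_of_walk (SimpleGraph.Walk.cons (adjDc 0 true (by decide)) (SimpleGraph.Walk.cons (adjDh true) (SimpleGraph.Walk.cons (adjDh' j true) (SimpleGraph.Walk.cons (adjDc 1 bv (by decide)) SimpleGraph.Walk.nil)))) ?_ ?_ ?_
        · refine List.Nodup.of_map (fun x : BV k => x.1.map (fun p => (((if p.1 = i then (0:Fin 2) else 1) : Fin 2), p.2))) ?_
          simp only [SimpleGraph.Walk.support_cons, SimpleGraph.Walk.support_nil,
            List.map_cons, List.map_nil, Option.map_some, Option.map_none,
            if_pos rfl, Ne.symm hij, if_false, if_true]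
          decide
        · intro hr
          have h := dist_lower_cross hij hr
          have e : cyc (1:ZMod 5) + 2 + cyc (1:ZMod 5) = 4 := by decide
          simp only [SimpleGraph.Walk.length_cons, SimpleGraph.Walk.length_nil]
          omega
        · intro w hw hwu hwv
          simp only [SimpleGraph.Walk.support_cons, SimpleGraph.Walk.support_nil,
            List.mem_cons, List.not_mem_nil, or_false] at hw
          rcases hw with rfl | rfl | rfl | rfl | rfl
          · exact absurd rfl hwu
          · exact not_mem_SB_some (by decide)
          · exact not_mem_SB_none
          · exact not_mem_SB_some (by decide)
          · exact absurd rfl hwv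
      · refine svis_of_walk (SimpleGraph.Walk.cons (adjDc 0 true (by decide)) (SimpleGraph.Walk.cons (adjDh true) (SimpleGraph.Walk.cons (adjDh' j true) (SimpleGraph.Walk.cons (adjDc 4 true (by decide)) (SimpleGraph.Walk.cons (adjDc 3 bv (by decide)) SimpleGraph.Walk.nil))))) ?_ ?_ ?_
        · refine List.Nodup.of_map (fun x : BV k => x.1.map (fun p => (((if p.1 = i then (0:Fin 2) else 1) : Fin 2), p.2))) ?_
          simp only [SimpleGraph.Walk.support_cons, SimpleGraph.Walk.support_nil,
            List.map_cons, List.map_nil, Option.map_some, Option.map_none,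
            if_pos rfl, Ne.symm hij, if_false, if_true]
          decide
        · intro hr
          have h := dist_lower_cross hij hr
          have e : cyc (3:ZMod 5) + 2 + cyc (1:ZMod 5) = 5 := by decide
          simp only [SimpleGraph.Walk.length_cons, SimpleGraph.Walk.length_nil]
          omega
        · intro w hw hwu hwv
          simp only [SimpleGraph.Walk.support_cons, SimpleGraph.Walk.support_nil,
            List.mem_cons, List.not_mem_nil, or_false] at hw
          rcases hw with rfl | rfl | rfl | rfl | rfl | rfl
          · exact absurd rfl hwu
          · exact not_mem_SB_some (by decide)
          · exact not_mem_SB_none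
          · exact not_mem_SB_some (by decide)
          · exact not_mem_SB_some (by decide)
          · exact absurd rfl hwv
      · refine svis_of_walk (SimpleGraph.Walk.cons (adjDc 0 true (by decide)) (SimpleGraph.Walk.cons (adjDh true) (SimpleGraph.Walk.cons (adjDh' j false) SimpleGraph.Walk.nil))) ?_ ?_ ?_
        · refine List.Nodup.of_map (fun x : BV k => x.1.map (fun p => (((if p.1 = i then (0:Fin 2) else 1) : Fin 2), p.2))) ?_
          simp only [SimpleGraph.Walk.support_cons, SimpleGraph.Walk.support_nil,
            List.map_cons, List.map_nil, Option.map_some, Option.map_none,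
            if_pos rfl, Ne.symm hij, if_false, if_true]
          decide
        · intro hr
          have h := dist_lower_cross hij hr
          have e : cyc (0:ZMod 5) + 2 + cyc (1:ZMod 5) = 3 := by decide
          simp only [SimpleGraph.Walk.length_cons, SimpleGraph.Walk.length_nil]
          omega
        · intro w hw hwu hwv
          simp only [SimpleGraph.Walk.support_cons, SimpleGraph.Walk.support_nil,
            List.mem_cons, List.not_mem_nil, or_false] at hw
          rcases hw with rfl | rfl | rfl | rfl
          · exact absurd rfl hwu
          · exact not_mem_SB_some (by decide)
          · exact not_mem_SB_none
          · exact absurd rfl hwv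
      · refine svis_of_walk (SimpleGraph.Walk.cons (adjDc 0 true (by decide)) (SimpleGraph.Walk.cons (adjDh true) (SimpleGraph.Walk.cons (adjDh' j true) (SimpleGraph.Walk.cons (adjDc 4 false (by decide)) SimpleGraph.Walk.nil)))) ?_ ?_ ?_
        · refine List.Nodup.of_map (fun x : BV k => x.1.map (fun p => (((if p.1 = i then (0:Fin 2) else 1) : Fin 2), p.2))) ?_
          simp only [SimpleGraph.Walk.support_cons, SimpleGraph.Walk.support_nil,
            List.map_cons, List.map_nil, Option.map_some, Option.map_none,
            if_pos rfl, Ne.symm hij, if_false, if_true]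
          decide
        · intro hr
          have h := dist_lower_cross hij hr
          have e : cyc (4:ZMod 5) + 2 + cyc (1:ZMod 5) = 4 := by decide
          simp only [SimpleGraph.Walk.length_cons, SimpleGraph.Walk.length_nil]
          omega
        · intro w hw hwu hwv
          simp only [SimpleGraph.Walk.support_cons, SimpleGraph.Walk.support_nil,
            List.mem_cons, List.not_mem_nil, or_false] at hw
          rcases hw with rfl | rfl | rfl | rfl | rfl
          · exact absurd rfl hwu
          · exact not_mem_SB_some (by decide)
          · exact not_mem_SB_none
          · exact not_mem_SB_some (by decide)
          · exact absurd rfl hwv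
    · rcases hQ _ hv' with rfl | rfl | ⟨rfl, rfl⟩ | ⟨rfl, rfl⟩
      · refine svis_of_walk (SimpleGraph.Walk.cons (adjDc 4 true (by decide)) (SimpleGraph.Walk.cons (adjDc 0 true (by decide)) (SimpleGraph.Walk.cons (adjDh true) (SimpleGraph.Walk.cons (adjDh' j true) (SimpleGraph.Walk.cons (adjDc 1 bv (by decide)) SimpleGraph.Walk.nil))))) ?_ ?_ ?_
        · refine List.Nodup.of_map (fun x : BV k => x.1.map (fun p => (((if p.1 = i then (0:Fin 2) else 1) : Fin 2), p.2))) ?_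
          simp only [SimpleGraph.Walk.support_cons, SimpleGraph.Walk.support_nil,
            List.map_cons, List.map_nil, Option.map_some, Option.map_none,
            if_pos rfl, Ne.symm hij, if_false, if_true]
          decide
        · intro hr
          have h := dist_lower_cross hij hr
          have e : cyc (1:ZMod 5) + 2 + cyc (3:ZMod 5) = 5 := by decide
          simp only [SimpleGraph.Walk.length_cons, SimpleGraph.Walk.length_nil]
          omega
        · intro w hw hwu hwv
          simp only [SimpleGraph.Walk.support_cons, SimpleGraph.Walk.support_nil,
            List.mem_cons, List.not_mem_nil, or_false] at hw
          rcases hw with rfl | rfl | rfl | rfl | rfl | rfl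
          · exact absurd rfl hwu
          · exact not_mem_SB_some (by decide)
          · exact not_mem_SB_some (by decide)
          · exact not_mem_SB_none
          · exact not_mem_SB_some (by decide)
          · exact absurd rfl hwv
      · refine svis_of_walk (SimpleGraph.Walk.cons (adjDc 4 true (by decide)) (SimpleGraph.Walk.cons (adjDc 0 true (by decide)) (SimpleGraph.Walk.cons (adjDh true) (SimpleGraph.Walk.cons (adjDh' j true) (SimpleGraph.Walk.cons (adjDc 4 true (by decide)) (SimpleGraph.Walk.cons (adjDc 3 bv (by decide)) SimpleGraph.Walk.nil)))))) ?_ ?_ ?_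
        · refine List.Nodup.of_map (fun x : BV k => x.1.map (fun p => (((if p.1 = i then (0:Fin 2) else 1) : Fin 2), p.2))) ?_
          simp only [SimpleGraph.Walk.support_cons, SimpleGraph.Walk.support_nil,
            List.map_cons, List.map_nil, Option.map_some, Option.map_none,
            if_pos rfl, Ne.symm hij, if_false, if_true]
          decide
        · intro hr
          have h := dist_lower_cross hij hr
          have e : cyc (3:ZMod 5) + 2 + cyc (3:ZMod 5) = 6 := by decide
          simp only [SimpleGraph.Walk.length_cons, SimpleGraph.Walk.length_nil]
          omega
        · intro w hw hwu hwv
          simp only [SimpleGraph.Walk.support_cons, SimpleGraph.Walk.support_nil,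
            List.mem_cons, List.not_mem_nil, or_false] at hw
          rcases hw with rfl | rfl | rfl | rfl | rfl | rfl | rfl
          · exact absurd rfl hwu
          · exact not_mem_SB_some (by decide)
          · exact not_mem_SB_some (by decide)
          · exact not_mem_SB_none
          · exact not_mem_SB_some (by decide)
          · exact not_mem_SB_some (by decide)
          · exact absurd rfl hwv
      · refine svis_of_walk (SimpleGraph.Walk.cons (adjDc 4 true (by decide)) (SimpleGraph.Walk.cons (adjDc 0 true (by decide)) (SimpleGraph.Walk.cons (adjDh true) (SimpleGraph.Walk.cons (adjDh' j false) SimpleGraph.Walk.nil)))) ?_ ?_ ?_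
        · refine List.Nodup.of_map (fun x : BV k => x.1.map (fun p => (((if p.1 = i then (0:Fin 2) else 1) : Fin 2), p.2))) ?_
          simp only [SimpleGraph.Walk.support_cons, SimpleGraph.Walk.support_nil,
            List.map_cons, List.map_nil, Option.map_some, Option.map_none,
            if_pos rfl, Ne.symm hij, if_false, if_true]
          decide
        · intro hr
          have h := dist_lower_cross hij hr
          have e : cyc (0:ZMod 5) + 2 + cyc (3:ZMod 5) = 4 := by decide
          simp only [SimpleGraph.Walk.length_cons, SimpleGraph.Walk.length_nil]
          omega
        · intro w hw hwu hwv
          simp only [SimpleGraph.Walk.support_cons, SimpleGraph.Walk.support_nil,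
            List.mem_cons, List.not_mem_nil, or_false] at hw
          rcases hw with rfl | rfl | rfl | rfl | rfl
          · exact absurd rfl hwu
          · exact not_mem_SB_some (by decide)
          · exact not_mem_SB_some (by decide)
          · exact not_mem_SB_none
          · exact absurd rfl hwv
      · refine svis_of_walk (SimpleGraph.Walk.cons (adjDc 4 true (by decide)) (SimpleGraph.Walk.cons (adjDc 0 true (by decide)) (SimpleGraph.Walk.cons (adjDh true) (SimpleGraph.Walk.cons (adjDh' j true) (SimpleGraph.Walk.cons (adjDc 4 false (by decide)) SimpleGraph.Walk.nil))))) ?_ ?_ ?_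
        · refine List.Nodup.of_map (fun x : BV k => x.1.map (fun p => (((if p.1 = i then (0:Fin 2) else 1) : Fin 2), p.2))) ?_
          simp only [SimpleGraph.Walk.support_cons, SimpleGraph.Walk.support_nil,
            List.map_cons, List.map_nil, Option.map_some, Option.map_none,
            if_pos rfl, Ne.symm hij, if_false, if_true]
          decide
        · intro hr
          have h := dist_lower_cross hij hr
          have e : cyc (4:ZMod 5) + 2 + cyc (3:ZMod 5) = 5 := by decide
          simp only [SimpleGraph.Walk.length_cons, SimpleGraph.Walk.length_nil]
          omega
        · intro w hw hwu hwv
          simp only [SimpleGraph.Walk.support_cons, SimpleGraph.Walk.support_nil,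
            List.mem_cons, List.not_mem_nil, or_false] at hw
          rcases hw with rfl | rfl | rfl | rfl | rfl | rfl
          · exact absurd rfl hwu
          · exact not_mem_SB_some (by decide)
          · exact not_mem_SB_some (by decide)
          · exact not_mem_SB_none
          · exact not_mem_SB_some (by decide)
          · exact absurd rfl hwv
    · rcases hQ _ hv' with rfl | rfl | ⟨rfl, rfl⟩ | ⟨rfl, rfl⟩
      · refine svis_of_walk (SimpleGraph.Walk.cons (adjDh true) (SimpleGraph.Walk.cons (adjDh' j true) (SimpleGraph.Walk.cons (adjDc 1 bv (by decide)) SimpleGraph.Walk.nil))) ?_ ?_ ?_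
        · refine List.Nodup.of_map (fun x : BV k => x.1.map (fun p => (((if p.1 = i then (0:Fin 2) else 1) : Fin 2), p.2))) ?_
          simp only [SimpleGraph.Walk.support_cons, SimpleGraph.Walk.support_nil,
            List.map_cons, List.map_nil, Option.map_some, Option.map_none,
            if_pos rfl, Ne.symm hij, if_false, if_true]
          decide
        · intro hr
          have h := dist_lower_cross hij hr
          have e : cyc (1:ZMod 5) + 2 + cyc (0:ZMod 5) = 3 := by decide
          simp only [SimpleGraph.Walk.length_cons, SimpleGraph.Walk.length_nil]
          omega
        · intro w hw hwu hwv
          simp only [SimpleGraph.Walk.support_cons, SimpleGraph.Walk.support_nil,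
            List.mem_cons, List.not_mem_nil, or_false] at hw
          rcases hw with rfl | rfl | rfl | rfl
          · exact absurd rfl hwu
          · exact not_mem_SB_none
          · exact not_mem_SB_some (by decide)
          · exact absurd rfl hwv
      · refine svis_of_walk (SimpleGraph.Walk.cons (adjDh true) (SimpleGraph.Walk.cons (adjDh' j true) (SimpleGraph.Walk.cons (adjDc 4 true (by decide)) (SimpleGraph.Walk.cons (adjDc 3 bv (by decide)) SimpleGraph.Walk.nil)))) ?_ ?_ ?_
        · refine List.Nodup.of_map (fun x : BV k => x.1.map (fun p => (((if p.1 = i then (0:Fin 2) else 1) : Fin 2), p.2))) ?_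
          simp only [SimpleGraph.Walk.support_cons, SimpleGraph.Walk.support_nil,
            List.map_cons, List.map_nil, Option.map_some, Option.map_none,
            if_pos rfl, Ne.symm hij, if_false, if_true]
          decide
        · intro hr
          have h := dist_lower_cross hij hr
          have e : cyc (3:ZMod 5) + 2 + cyc (0:ZMod 5) = 4 := by decide
          simp only [SimpleGraph.Walk.length_cons, SimpleGraph.Walk.length_nil]
          omega
        · intro w hw hwu hwv
          simp only [SimpleGraph.Walk.support_cons, SimpleGraph.Walk.support_nil,
            List.mem_cons, List.not_mem_nil, or_false] at hw
          rcases hw with rfl | rfl | rfl | rfl | rfl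
          · exact absurd rfl hwu
          · exact not_mem_SB_none
          · exact not_mem_SB_some (by decide)
          · exact not_mem_SB_some (by decide)
          · exact absurd rfl hwv
      · refine svis_of_walk (SimpleGraph.Walk.cons (adjDh true) (SimpleGraph.Walk.cons (adjDh' j false) SimpleGraph.Walk.nil)) ?_ ?_ ?_
        · refine List.Nodup.of_map (fun x : BV k => x.1.map (fun p => (((if p.1 = i then (0:Fin 2) else 1) : Fin 2), p.2))) ?_
          simp only [SimpleGraph.Walk.support_cons, SimpleGraph.Walk.support_nil,
            List.map_cons, List.map_nil, Option.map_some, Option.map_none,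
            if_pos rfl, Ne.symm hij, if_false, if_true]
          decide
        · intro hr
          have h := dist_lower_cross hij hr
          have e : cyc (0:ZMod 5) + 2 + cyc (0:ZMod 5) = 2 := by decide
          simp only [SimpleGraph.Walk.length_cons, SimpleGraph.Walk.length_nil]
          omega
        · intro w hw hwu hwv
          simp only [SimpleGraph.Walk.support_cons, SimpleGraph.Walk.support_nil,
            List.mem_cons, List.not_mem_nil, or_false] at hw
          rcases hw with rfl | rfl | rfl
          · exact absurd rfl hwu
          · exact not_mem_SB_none
          · exact absurd rfl hwv
      · refine svis_of_walk (SimpleGraph.Walk.cons (adjDh true) (SimpleGraph.Walk.cons (adjDh' j true) (SimpleGraph.Walk.cons (adjDc 4 false (by decide)) SimpleGraph.Walk.nil))) ?_ ?_ ?_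
        · refine List.Nodup.of_map (fun x : BV k => x.1.map (fun p => (((if p.1 = i then (0:Fin 2) else 1) : Fin 2), p.2))) ?_
          simp only [SimpleGraph.Walk.support_cons, SimpleGraph.Walk.support_nil,
            List.map_cons, List.map_nil, Option.map_some, Option.map_none,
            if_pos rfl, Ne.symm hij, if_false, if_true]
          decide
        · intro hr
          have h := dist_lower_cross hij hr
          have e : cyc (4:ZMod 5) + 2 + cyc (0:ZMod 5) = 3 := by decide
          simp only [SimpleGraph.Walk.length_cons, SimpleGraph.Walk.length_nil]
          omega
        · intro w hw hwu hwv
          simp only [SimpleGraph.Walk.support_cons, SimpleGraph.Walk.support_nil,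
            List.mem_cons, List.not_mem_nil, or_false] at hw
          rcases hw with rfl | rfl | rfl | rfl
          · exact absurd rfl hwu
          · exact not_mem_SB_none
          · exact not_mem_SB_some (by decide)
          · exact absurd rfl hwv
    · rcases hQ _ hv' with rfl | rfl | ⟨rfl, rfl⟩ | ⟨rfl, rfl⟩
      · refine svis_of_walk (SimpleGraph.Walk.cons (adjDc 0 true (by decide)) (SimpleGraph.Walk.cons (adjDh true) (SimpleGraph.Walk.cons (adjDh' j true) (SimpleGraph.Walk.cons (adjDc 1 bv (by decide)) SimpleGraph.Walk.nil)))) ?_ ?_ ?_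
        · refine List.Nodup.of_map (fun x : BV k => x.1.map (fun p => (((if p.1 = i then (0:Fin 2) else 1) : Fin 2), p.2))) ?_
          simp only [SimpleGraph.Walk.support_cons, SimpleGraph.Walk.support_nil,
            List.map_cons, List.map_nil, Option.map_some, Option.map_none,
            if_pos rfl, Ne.symm hij, if_false, if_true]
          decide
        · intro hr
          have h := dist_lower_cross hij hr
          have e : cyc (1:ZMod 5) + 2 + cyc (4:ZMod 5) = 4 := by decide
          simp only [SimpleGraph.Walk.length_cons, SimpleGraph.Walk.length_nil]
          omega
        · intro w hw hwu hwv
          simp only [SimpleGraph.Walk.support_cons, SimpleGraph.Walk.support_nil,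
            List.mem_cons, List.not_mem_nil, or_false] at hw
          rcases hw with rfl | rfl | rfl | rfl | rfl
          · exact absurd rfl hwu
          · exact not_mem_SB_some (by decide)
          · exact not_mem_SB_none
          · exact not_mem_SB_some (by decide)
          · exact absurd rfl hwv
      · refine svis_of_walk (SimpleGraph.Walk.cons (adjDc 0 true (by decide)) (SimpleGraph.Walk.cons (adjDh true) (SimpleGraph.Walk.cons (adjDh' j true) (SimpleGraph.Walk.cons (adjDc 4 true (by decide)) (SimpleGraph.Walk.cons (adjDc 3 bv (by decide)) SimpleGraph.Walk.nil))))) ?_ ?_ ?_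
        · refine List.Nodup.of_map (fun x : BV k => x.1.map (fun p => (((if p.1 = i then (0:Fin 2) else 1) : Fin 2), p.2))) ?_
          simp only [SimpleGraph.Walk.support_cons, SimpleGraph.Walk.support_nil,
            List.map_cons, List.map_nil, Option.map_some, Option.map_none,
            if_pos rfl, Ne.symm hij, if_false, if_true]
          decide
        · intro hr
          have h := dist_lower_cross hij hr
          have e : cyc (3:ZMod 5) + 2 + cyc (4:ZMod 5) = 5 := by decide
          simp only [SimpleGraph.Walk.length_cons, SimpleGraph.Walk.length_nil]
          omega
        · intro w hw hwu hwv
          simp only [SimpleGraph.Walk.support_cons, SimpleGraph.Walk.support_nil,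
            List.mem_cons, List.not_mem_nil, or_false] at hw
          rcases hw with rfl | rfl | rfl | rfl | rfl | rfl
          · exact absurd rfl hwu
          · exact not_mem_SB_some (by decide)
          · exact not_mem_SB_none
          · exact not_mem_SB_some (by decide)
          · exact not_mem_SB_some (by decide)
          · exact absurd rfl hwv
      · refine svis_of_walk (SimpleGraph.Walk.cons (adjDc 0 true (by decide)) (SimpleGraph.Walk.cons (adjDh true) (SimpleGraph.Walk.cons (adjDh' j false) SimpleGraph.Walk.nil))) ?_ ?_ ?_
        · refine List.Nodup.of_map (fun x : BV k => x.1.map (fun p => (((if p.1 = i then (0:Fin 2) else 1) : Fin 2), p.2))) ?_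
          simp only [SimpleGraph.Walk.support_cons, SimpleGraph.Walk.support_nil,
            List.map_cons, List.map_nil, Option.map_some, Option.map_none,
            if_pos rfl, Ne.symm hij, if_false, if_true]
          decide
        · intro hr
          have h := dist_lower_cross hij hr
          have e : cyc (0:ZMod 5) + 2 + cyc (4:ZMod 5) = 3 := by decide
          simp only [SimpleGraph.Walk.length_cons, SimpleGraph.Walk.length_nil]
          omega
        · intro w hw hwu hwv
          simp only [SimpleGraph.Walk.support_cons, SimpleGraph.Walk.support_nil,
            List.mem_cons, List.not_mem_nil, or_false] at hw
          rcases hw with rfl | rfl | rfl | rfl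
          · exact absurd rfl hwu
          · exact not_mem_SB_some (by decide)
          · exact not_mem_SB_none
          · exact absurd rfl hwv
      · refine svis_of_walk (SimpleGraph.Walk.cons (adjDc 0 true (by decide)) (SimpleGraph.Walk.cons (adjDh true) (SimpleGraph.Walk.cons (adjDh' j true) (SimpleGraph.Walk.cons (adjDc 4 false (by decide)) SimpleGraph.Walk.nil)))) ?_ ?_ ?_
        · refine List.Nodup.of_map (fun x : BV k => x.1.map (fun p => (((if p.1 = i then (0:Fin 2) else 1) : Fin 2), p.2))) ?_
          simp only [SimpleGraph.Walk.support_cons, SimpleGraph.Walk.support_nil,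
            List.map_cons, List.map_nil, Option.map_some, Option.map_none,
            if_pos rfl, Ne.symm hij, if_false, if_true]
          decide
        · intro hr
          have h := dist_lower_cross hij hr
          have e : cyc (4:ZMod 5) + 2 + cyc (4:ZMod 5) = 4 := by decide
          simp only [SimpleGraph.Walk.length_cons, SimpleGraph.Walk.length_nil]
          omega
        · intro w hw hwu hwv
          simp only [SimpleGraph.Walk.support_cons, SimpleGraph.Walk.support_nil,
            List.mem_cons, List.not_mem_nil, or_false] at hw
          rcases hw with rfl | rfl | rfl | rfl | rfl
          · exact absurd rfl hwu
          · exact not_mem_SB_some (by decide)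
          · exact not_mem_SB_none
          · exact not_mem_SB_some (by decide)
          · exact absurd rfl hwv
theorem mu_double_balloon (k : ℕ) (hk : 2 ≤ k) :
    Fintype.card (Option (Fin k × ZMod 5)) = 5 * k + 1 ∧
    (balloonGraph k).totalMutualVisibilityNumber = 0 ∧
    6 * k ≤ (balloonGraph k).doubleGraph.mutualVisibilityNumber := by
  refine ⟨?_, tmv_zero hk, ?_⟩
  · rw [Fintype.card_option, Fintype.card_prod, Fintype.card_fin, ZMod.card]
    ring
  · rw [SimpleGraph.mutualVisibilityNumber]
    refine le_csSup ⟨Fintype.card (BV k), ?_⟩ ⟨SB k, mv_SB, card_SB⟩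
    rintro n ⟨S, -, rfl⟩
    exact le_trans (Finset.card_le_univ S) (le_of_eq Finset.card_univ)
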